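/- For positive integers k, m, n, the region 𝒯(k,m,n) is empty if and only if at least one of the following holds: (1) the pair (k,m) or the pair (m,n) satisfies one of: second entry 1 and first entry 1; second entry 2 and first entry ≥ 5; second entry in {3,4} and first entry ≥ 3; second entry ≥ 5 and first entry ≥ 2; (2a) m=1, k=2, 1 ≤ n ≤ 5; (2b) m=1, k=3, n ∉ {4,5,6,7,8}; (2c) m=1, k=4, n ∉ {3,4,5}; (2d) m=1, k=5, n ∉ {3,4}; (2e) m=1, 6 ≤ k ≤ 8, n ≥ 4; (2f) m=1, k ≥ 9, n ≥ 3; (3a) m=2, k=1, n ∉ {2,3,4}; (3b) m=2, k=2, n ≥ 4; (3c) m=2, k=3, n ≥ 3; (3d) m=2, k=4, n ≥ 2; (4a) m=3, k=1, n ≥ 3; (4b) m=3, k=2, n ≥ 3; (5a) m=4, k=1, n ≥ 3; (5b) m=4, k=2, n ≥ 2; (6) m ≥ 5, k=1, n ≥ 2. -/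

import Mathlib

open MeasureTheory

/-- The BCZ transform T(x,y) = (y, ⌊(1+x)/y⌋·y − x). -/
noncomputable def bcz (p : ℝ × ℝ) : ℝ × ℝ :=
  (p.2, (⌊(1 + p.1) / p.2⌋ : ℝ) * p.2 - p.1)

/-- The Farey triangle 𝒯 = {(x,y) : 0 < x ≤ 1, 0 < y ≤ 1, x + y > 1}. -/
def fareyTriangle : Set (ℝ × ℝ) :=
  {p | 0 < p.1 ∧ p.1 ≤ 1 ∧ 0 < p.2 ∧ p.2 ≤ 1 ∧ 1 < p.1 + p.2}

/-- The region 𝒯(k) = {(x,y) ∈ 𝒯 : ⌊(1+x)/y⌋ = k}. -/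
def TT (k : ℕ) : Set (ℝ × ℝ) :=
  {p | p ∈ fareyTriangle ∧ ⌊(1 + p.1) / p.2⌋ = (k : ℤ)}

/-- The region 𝒯(k₁,…,k_r) = 𝒯(k₁) ∩ T⁻¹(𝒯(k₂)) ∩ ⋯ ∩ T^{−(r−1)}(𝒯(k_r)). -/
noncomputable def TTlist (ks : List ℕ) : Set (ℝ × ℝ) :=
  ⋂ i : Fin ks.length, (bcz^[i.1]) ⁻¹' TT (ks.get i)

/-- The condition of Lemma 2: the pair (a,b) (first entry a, second entry b) makes 𝒯(a,b) empty. -/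
def badPair (a b : ℕ) : Prop :=
  (b = 1 ∧ a = 1) ∨ (b = 2 ∧ 5 ≤ a) ∨ ((b = 3 ∨ b = 4) ∧ 3 ≤ a) ∨ (5 ≤ b ∧ 2 ≤ a)


lemma floor_div_eq_iff {a b : ℝ} (hb : 0 < b) (c : ℕ) :
    ⌊a / b⌋ = (c : ℤ) ↔ (c:ℝ) * b ≤ a ∧ a < ((c:ℝ) + 1) * b := by
  rw [Int.floor_eq_iff, le_div_iff₀ hb, div_lt_iff₀ hb]
  push_cast
  exact Iff.rfl

lemma mem_triple_iff (k m n : ℕ) (p : ℝ × ℝ) :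
    p ∈ TTlist [k, m, n] ↔ p ∈ TT k ∧ bcz p ∈ TT m ∧ bcz (bcz p) ∈ TT n := by
  constructor
  · intro h
    rw [TTlist, Set.mem_iInter] at h
    refine ⟨h ⟨0, by norm_num⟩, h ⟨1, by norm_num⟩, ?_⟩
    have := h ⟨2, by norm_num⟩
    simpa [Function.iterate_succ_apply] using this
  · rintro ⟨h0, h1, h2⟩
    rw [TTlist, Set.mem_iInter]
    intro i
    fin_cases i
    · exact h0
    · exact h1
    · simpa [Function.iterate_succ_apply] using h2

lemma mem_TT_pair (k : ℕ) {x y : ℝ} (hx0 : 0 < x) (hx1 : x ≤ 1) (hy0 : 0 < y)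
    (hy1 : y ≤ 1) (hxy : 1 < x + y) (ha : (k:ℝ) * y ≤ 1 + x)
    (hb : 1 + x < ((k:ℝ) + 1) * y) :
    (x, y) ∈ TT k ∧ bcz (x, y) = (y, (k:ℝ) * y - x) := by
  have f1 : ⌊(1 + x) / y⌋ = (k : ℤ) := (floor_div_eq_iff hy0 k).2 ⟨ha, hb⟩
  refine ⟨⟨⟨hx0, hx1, hy0, hy1, hxy⟩, f1⟩, ?_⟩
  simp only [bcz, f1]
  norm_num

lemma bcz_build {k m n : ℕ} {x y : ℝ}
    (h : 0 < x ∧ x ≤ 1 ∧ 0 < y ∧ y ≤ 1 ∧ 1 < x + y ∧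
      (k:ℝ) * y ≤ 1 + x ∧ 1 + x < ((k:ℝ) + 1) * y ∧
      (m:ℝ) * ((k:ℝ) * y - x) ≤ 1 + y ∧ 1 + y < ((m:ℝ) + 1) * ((k:ℝ) * y - x) ∧
      (n:ℝ) * ((m:ℝ) * ((k:ℝ) * y - x) - y) ≤ 1 + ((k:ℝ) * y - x) ∧
      1 + ((k:ℝ) * y - x) < ((n:ℝ) + 1) * ((m:ℝ) * ((k:ℝ) * y - x) - y)) :
    (x, y) ∈ TTlist [k, m, n] := by
  obtain ⟨hx0, hx1, hy0, hy1, hxy, h1a, h1b, h2a, h2b, h3a, h3b⟩ := h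
  set z : ℝ := (k:ℝ) * y - x with hzd
  set w : ℝ := (m:ℝ) * z - y with hwd
  have hz1 : z ≤ 1 := by simp only [hzd]; linarith
  have hz0 : 1 - y < z := by simp only [hzd]; linarith
  have hz0' : 0 < z := by linarith
  have hw1 : w ≤ 1 := by simp only [hwd]; linarith
  have hw0 : 1 - z < w := by simp only [hwd]; linarith
  have hw0' : 0 < w := by linarith
  obtain ⟨m1, e1⟩ := mem_TT_pair k hx0 hx1 hy0 hy1 hxy h1a h1b
  obtain ⟨m2, e2⟩ := mem_TT_pair m hy0 hy1 hz0' hz1 (by linarith) h2a h2b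
  obtain ⟨m3, e3⟩ := mem_TT_pair n hz0' hz1 hw0' hw1 (by linarith) h3a h3b
  rw [mem_triple_iff]
  rw [e1, e2]
  exact ⟨m1, m2, m3⟩

lemma bcz_extract {k m n : ℕ} {x y : ℝ} (h : (x, y) ∈ TTlist [k, m, n]) :
    0 < x ∧ x ≤ 1 ∧ 0 < y ∧ y ≤ 1 ∧ 1 < x + y ∧
    (k:ℝ) * y ≤ 1 + x ∧ 1 + x < ((k:ℝ) + 1) * y ∧
    0 < (k:ℝ) * y - x ∧ (k:ℝ) * y - x ≤ 1 ∧ 1 < y + ((k:ℝ) * y - x) ∧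
    (m:ℝ) * ((k:ℝ) * y - x) ≤ 1 + y ∧ 1 + y < ((m:ℝ) + 1) * ((k:ℝ) * y - x) ∧
    0 < (m:ℝ) * ((k:ℝ) * y - x) - y ∧ (m:ℝ) * ((k:ℝ) * y - x) - y ≤ 1 ∧
    1 < ((k:ℝ) * y - x) + ((m:ℝ) * ((k:ℝ) * y - x) - y) ∧
    (n:ℝ) * ((m:ℝ) * ((k:ℝ) * y - x) - y) ≤ 1 + ((k:ℝ) * y - x) ∧
    1 + ((k:ℝ) * y - x) < ((n:ℝ) + 1) * ((m:ℝ) * ((k:ℝ) * y - x) - y) := by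
  rw [mem_triple_iff] at h
  obtain ⟨h0, h1, h2⟩ := h
  obtain ⟨⟨hx0, hx1, hy0, hy1, hxy⟩, f1⟩ := h0
  simp only at hx0 hx1 hy0 hy1 hxy f1
  obtain ⟨h1a, h1b⟩ := (floor_div_eq_iff hy0 k).1 f1
  have e1 : bcz (x, y) = (y, (k:ℝ) * y - x) := by
    simp only [bcz, f1]; norm_num
  rw [e1] at h1 h2
  obtain ⟨⟨_, _, hz0, hz1, hyz⟩, f2⟩ := h1
  simp only at hz0 hz1 hyz f2
  obtain ⟨h2a, h2b⟩ := (floor_div_eq_iff hz0 m).1 f2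
  have e2 : bcz (y, (k:ℝ) * y - x) = ((k:ℝ) * y - x, (m:ℝ) * ((k:ℝ) * y - x) - y) := by
    simp only [bcz, f2]; norm_num
  rw [e2] at h2
  obtain ⟨⟨_, _, hw0, hw1, hzw⟩, f3⟩ := h2
  simp only at hw0 hw1 hzw f3
  obtain ⟨h3a, h3b⟩ := (floor_div_eq_iff hw0 n).1 f3
  exact ⟨hx0, hx1, hy0, hy1, hxy, h1a, h1b, hz0, hz1, hyz, h2a, h2b, hw0, hw1, hzw, h3a, h3b⟩

lemma bcz_build_frac {k m n : ℕ} {a b c : ℝ} (hc : 0 < c)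
    (h1 : 0 < a) (h2 : a ≤ c) (h3 : 0 < b) (h4 : b ≤ c) (h5 : c < a + b)
    (h6 : (k:ℝ)*b ≤ c + a) (h7 : c + a < ((k:ℝ)+1)*b)
    (h8 : (m:ℝ)*((k:ℝ)*b - a) ≤ c + b) (h9 : c + b < ((m:ℝ)+1)*((k:ℝ)*b - a))
    (h10 : (n:ℝ)*((m:ℝ)*((k:ℝ)*b - a) - b) ≤ c + ((k:ℝ)*b - a))
    (h11 : c + ((k:ℝ)*b - a) < ((n:ℝ)+1)*((m:ℝ)*((k:ℝ)*b - a) - b)) :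
    (a/c, b/c) ∈ TTlist [k, m, n] := by
  apply bcz_build
  have ez : (k:ℝ)*(b/c) - a/c = ((k:ℝ)*b - a)/c := by rw [← mul_div_assoc, div_sub_div_same]
  have ew : (m:ℝ)*(((k:ℝ)*b - a)/c) - b/c = ((m:ℝ)*((k:ℝ)*b - a) - b)/c := by
    rw [← mul_div_assoc, div_sub_div_same]
  have e1 : (1:ℝ) + a/c = (c+a)/c := by rw [add_div, div_self hc.ne']
  have e1b : (1:ℝ) + b/c = (c+b)/c := by rw [add_div, div_self hc.ne']
  have e1z : (1:ℝ) + ((k:ℝ)*b - a)/c = (c + ((k:ℝ)*b - a))/c := by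
    rw [add_div, div_self hc.ne']
  refine ⟨div_pos h1 hc, (div_le_one hc).2 h2, div_pos h3 hc, (div_le_one hc).2 h4,
    ?_, ?_, ?_, ?_, ?_, ?_, ?_⟩
  · rw [← add_div, lt_div_iff₀ hc, one_mul]; exact h5
  · rw [← mul_div_assoc, e1, div_le_div_iff_of_pos_right hc]; exact h6
  · rw [← mul_div_assoc, e1, div_lt_div_iff_of_pos_right hc]; exact h7
  · rw [ez, ← mul_div_assoc, e1b, div_le_div_iff_of_pos_right hc]; exact h8
  · rw [ez, ← mul_div_assoc, e1b, div_lt_div_iff_of_pos_right hc]; exact h9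
  · rw [ez, ew, ← mul_div_assoc, e1z, div_le_div_iff_of_pos_right hc]; exact h10
  · rw [ez, ew, ← mul_div_assoc, e1z, div_lt_div_iff_of_pos_right hc]; exact h11

lemma famA {k : ℕ} (hk : 6 ≤ k) : (TTlist [k, 1, 2]).Nonempty := by
  have hK : (6:ℝ) ≤ (k:ℝ) := by exact_mod_cast hk
  have hc : (0:ℝ) < 2*(k:ℝ)+1 := by linarith
  exact ⟨((2*(k:ℝ)-1)/(2*(k:ℝ)+1), 4/(2*(k:ℝ)+1)),
    bcz_build_frac hc (by linarith) (by linarith) (by norm_num) (by linarith) (by linarith)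
      (by push_cast; linarith) (by push_cast; nlinarith) (by push_cast; nlinarith)
      (by push_cast; nlinarith) (by push_cast; nlinarith) (by push_cast; nlinarith)⟩

lemma famB {n : ℕ} (hn : 6 ≤ n) : (TTlist [2, 1, n]).Nonempty := by
  have hN : (6:ℝ) ≤ (n:ℝ) := by exact_mod_cast hn
  have hc : (0:ℝ) < 2*(n:ℝ)+1 := by linarith
  exact ⟨((2*(n:ℝ)-7)/(2*(n:ℝ)+1), (2*(n:ℝ)-3)/(2*(n:ℝ)+1)),
    bcz_build_frac hc (by linarith) (by linarith) (by linarith) (by linarith) (by linarith)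
      (by push_cast; linarith) (by push_cast; nlinarith) (by push_cast; nlinarith)
      (by push_cast; nlinarith) (by push_cast; nlinarith) (by push_cast; nlinarith)⟩

lemma famC {m : ℕ} (hm : 3 ≤ m) : (TTlist [1, m, 1]).Nonempty := by
  have hM : (3:ℝ) ≤ (m:ℝ) := by exact_mod_cast hm
  have hc : (0:ℝ) < (m:ℝ) := by linarith
  exact ⟨(((m:ℝ)-2)/(m:ℝ), (m:ℝ)/(m:ℝ)),
    bcz_build_frac hc (by linarith) (by linarith) (by linarith) (by linarith) (by linarith)
      (by push_cast; linarith) (by push_cast; nlinarith) (by push_cast; nlinarith)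
      (by push_cast; nlinarith) (by push_cast; nlinarith) (by push_cast; nlinarith)⟩


set_option maxHeartbeats 1000000 in
lemma good_nonempty (k m n : ℕ) (hk : 0 < k) (hm : 0 < m) (hn : 0 < n)
    (h : ¬ ((badPair k m ∨ badPair m n) ∨
      (m = 1 ∧ k = 2 ∧ 1 ≤ n ∧ n ≤ 5) ∨
      (m = 1 ∧ k = 3 ∧ ¬ (n = 4 ∨ n = 5 ∨ n = 6 ∨ n = 7 ∨ n = 8)) ∨
      (m = 1 ∧ k = 4 ∧ ¬ (n = 3 ∨ n = 4 ∨ n = 5)) ∨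
      (m = 1 ∧ k = 5 ∧ ¬ (n = 3 ∨ n = 4)) ∨
      (m = 1 ∧ 6 ≤ k ∧ k ≤ 8 ∧ 4 ≤ n) ∨
      (m = 1 ∧ 9 ≤ k ∧ 3 ≤ n) ∨
      (m = 2 ∧ k = 1 ∧ ¬ (n = 2 ∨ n = 3 ∨ n = 4)) ∨
      (m = 2 ∧ k = 2 ∧ 4 ≤ n) ∨
      (m = 2 ∧ k = 3 ∧ 3 ≤ n) ∨
      (m = 2 ∧ k = 4 ∧ 2 ≤ n) ∨
      (m = 3 ∧ k = 1 ∧ 3 ≤ n) ∨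
      (m = 3 ∧ k = 2 ∧ 3 ≤ n) ∨
      (m = 4 ∧ k = 1 ∧ 3 ≤ n) ∨
      (m = 4 ∧ k = 2 ∧ 2 ≤ n) ∨
      (5 ≤ m ∧ k = 1 ∧ 2 ≤ n))) :
    (TTlist [k, m, n]).Nonempty := by
  simp only [badPair, not_or] at h
  obtain ⟨⟨⟨p1, p2, p3, p4⟩, q1, q2, q3, q4⟩, c2, c3, c4, c5, c6, c7, c8, c9, c10,
    c11, c12, c13, c14, c15, c16⟩ := h
  rcases Nat.lt_or_ge m 5 with hm5 | hm5
  · interval_cases m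
    · -- m = 1
      rcases Nat.lt_or_ge k 9 with hk9 | hk9
      · interval_cases k
        · exact (p1 ⟨rfl, rfl⟩).elim
        · have h6 : 6 ≤ n := by clear p1 p2 p3 p4 q2 q3 q4 c3 c4 c5 c6 c7 c8 c9 c10 c11 c12 c13 c14 c15 c16; omega
          exact famB h6
        · have hb : 4 ≤ n ∧ n ≤ 8 := by clear p1 p2 p3 p4 q1 q2 q3 q4 c2 c4 c5 c6 c7 c8 c9 c10 c11 c12 c13 c14 c15 c16; omega
          obtain ⟨hb1, hb2⟩ := hb
          interval_cases n
          · exact ⟨(7/12, 1/2), bcz_build (by norm_num)⟩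
          · exact ⟨(2/3, 1/2), bcz_build (by norm_num)⟩
          · exact ⟨(1, 2/3), bcz_build (by norm_num)⟩
          · exact ⟨(1, 5/8), bcz_build (by norm_num)⟩
          · exact ⟨(47/48, 29/48), bcz_build (by norm_num)⟩
        · have hb : 3 ≤ n ∧ n ≤ 5 := by clear p1 p2 p3 p4 q1 q2 q3 q4 c2 c3 c5 c6 c7 c8 c9 c10 c11 c12 c13 c14 c15 c16; omega
          obtain ⟨hb1, hb2⟩ := hb
          interval_cases n
          · exact ⟨(2/3, 5/12), bcz_build (by norm_num)⟩
          · exact ⟨(1, 1/2), bcz_build (by norm_num)⟩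
          · exact ⟨(11/12, 5/12), bcz_build (by norm_num)⟩
        · have hb : 3 ≤ n ∧ n ≤ 4 := by clear p1 p2 p3 p4 q1 q2 q3 q4 c2 c3 c4 c6 c7 c8 c9 c10 c11 c12 c13 c14 c15 c16; omega
          obtain ⟨hb1, hb2⟩ := hb
          interval_cases n
          · exact ⟨(5/6, 1/3), bcz_build (by norm_num)⟩
          · exact ⟨(11/12, 1/3), bcz_build (by norm_num)⟩
        · have hb : n = 2 ∨ n = 3 := by clear p1 p2 p3 p4 q2 q3 q4 c2 c3 c4 c5 c7 c8 c9 c10 c11 c12 c13 c14 c15 c16; omega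
          rcases hb with rfl | rfl
          · exact famA (by norm_num)
          · exact ⟨(1, 1/3), bcz_build (by norm_num)⟩
        · have hb : n = 2 ∨ n = 3 := by clear p1 p2 p3 p4 q2 q3 q4 c2 c3 c4 c5 c7 c8 c9 c10 c11 c12 c13 c14 c15 c16; omega
          rcases hb with rfl | rfl
          · exact famA (by norm_num)
          · exact ⟨(7/8, 1/4), bcz_build (by norm_num)⟩
        · have hb : n = 2 ∨ n = 3 := by clear p1 p2 p3 p4 q2 q3 q4 c2 c3 c4 c5 c7 c8 c9 c10 c11 c12 c13 c14 c15 c16; omega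
          rcases hb with rfl | rfl
          · exact famA (by norm_num)
          · exact ⟨(41/48, 5/24), bcz_build (by norm_num)⟩
      · have hb : n = 2 := by clear p1 p2 p3 p4 q2 q3 q4 c2 c3 c4 c5 c6 c8 c9 c10 c11 c12 c13 c14 c15 c16; omega
        subst hb
        exact famA (le_trans (by norm_num) hk9)
    · -- m = 2
      have hk4 : k ≤ 4 := by clear p1 p3 p4 q1 q2 q3 q4 c2 c3 c4 c5 c6 c7 c8 c9 c10 c11 c12 c13 c14 c15 c16; omega
      interval_cases k
      · have hb : 2 ≤ n ∧ n ≤ 4 := by clear p1 p2 p3 p4 q1 q2 q3 q4 c2 c3 c4 c5 c6 c7 c9 c10 c11 c12 c13 c14 c15 c16; omega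
        obtain ⟨hb1, hb2⟩ := hb
        interval_cases n
        · exact ⟨(1/6, 1), bcz_build (by norm_num)⟩
        · exact ⟨(1/4, 1), bcz_build (by norm_num)⟩
        · exact ⟨(1/4, 11/12), bcz_build (by norm_num)⟩
      · have hb : n ≤ 3 := by clear p1 p2 p3 p4 q1 q2 q3 q4 c2 c3 c4 c5 c6 c7 c8 c10 c11 c12 c13 c14 c15 c16; omega
        interval_cases n
        · exact ⟨(1/2, 2/3), bcz_build (by norm_num)⟩
        · exact ⟨(1, 1), bcz_build (by norm_num)⟩
        · exact ⟨(1, 5/6), bcz_build (by norm_num)⟩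
      · have hb : n ≤ 2 := by clear p1 p2 p3 p4 q1 q2 q3 q4 c2 c3 c4 c5 c6 c7 c8 c9 c11 c12 c13 c14 c15 c16; omega
        interval_cases n
        · exact ⟨(3/4, 1/2), bcz_build (by norm_num)⟩
        · exact ⟨(5/6, 1/2), bcz_build (by norm_num)⟩
      · have hb : n = 1 := by clear p1 p2 p3 p4 q1 q2 q3 q4 c2 c3 c4 c5 c6 c7 c8 c9 c10 c12 c13 c14 c15 c16; omega
        subst hb
        exact ⟨(1, 5/12), bcz_build (by norm_num)⟩
    · -- m = 3
      have hk2 : k ≤ 2 := by clear p1 p2 p4 q1 q2 q3 q4 c2 c3 c4 c5 c6 c7 c8 c9 c10 c11 c12 c13 c14 c15 c16; omega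
      have hn2 : n ≤ 2 := by clear p1 p2 p3 p4 q1 q2 c2 c3 c4 c5 c6 c7 c8 c9 c10 c11 c12 c13 c14 c15 c16; omega
      interval_cases k
      · interval_cases n
        · exact ⟨(1/3, 1), bcz_build (by norm_num)⟩
        · exact ⟨(1/3, 5/6), bcz_build (by norm_num)⟩
      · interval_cases n
        · exact ⟨(5/6, 2/3), bcz_build (by norm_num)⟩
        · exact ⟨(1, 3/4), bcz_build (by norm_num)⟩
    · -- m = 4
      have hk2 : k ≤ 2 := by clear p1 p2 p4 q1 q2 q3 q4 c2 c3 c4 c5 c6 c7 c8 c9 c10 c11 c12 c13 c14 c15 c16; omega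
      interval_cases k
      · have hn2 : n ≤ 2 := by clear p1 p2 p3 p4 q1 q2 c2 c3 c4 c5 c6 c7 c8 c9 c10 c11 c12 c13 c14 c15 c16; omega
        interval_cases n
        · exact ⟨(1/2, 1), bcz_build (by norm_num)⟩
        · exact ⟨(7/12, 1), bcz_build (by norm_num)⟩
      · have hb : n = 1 := by clear p1 p2 p3 p4 q1 q2 q3 q4 c2 c3 c4 c5 c6 c7 c8 c9 c10 c11 c12 c13 c14 c16; omega
        subst hb
        exact ⟨(11/12, 2/3), bcz_build (by norm_num)⟩
  · -- 5 ≤ m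
    have hk1 : k = 1 := by clear p1 p2 p3 q1 q2 q3 q4 c2 c3 c4 c5 c6 c7 c8 c9 c10 c11 c12 c13 c14 c15 c16; omega
    have hn1 : n = 1 := by clear p1 p2 p3 p4 q1 c2 c3 c4 c5 c6 c7 c8 c9 c10 c11 c12 c13 c14 c15 c16; omega
    subst hk1; subst hn1
    exact famC (le_trans (by norm_num) hm5)

lemma empty_of_cond (k m n : ℕ) (hk : 0 < k) (hm : 0 < m) (hn : 0 < n)
    (hc : (badPair k m ∨ badPair m n) ∨
      (m = 1 ∧ k = 2 ∧ 1 ≤ n ∧ n ≤ 5) ∨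
      (m = 1 ∧ k = 3 ∧ ¬ (n = 4 ∨ n = 5 ∨ n = 6 ∨ n = 7 ∨ n = 8)) ∨
      (m = 1 ∧ k = 4 ∧ ¬ (n = 3 ∨ n = 4 ∨ n = 5)) ∨
      (m = 1 ∧ k = 5 ∧ ¬ (n = 3 ∨ n = 4)) ∨
      (m = 1 ∧ 6 ≤ k ∧ k ≤ 8 ∧ 4 ≤ n) ∨
      (m = 1 ∧ 9 ≤ k ∧ 3 ≤ n) ∨
      (m = 2 ∧ k = 1 ∧ ¬ (n = 2 ∨ n = 3 ∨ n = 4)) ∨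
      (m = 2 ∧ k = 2 ∧ 4 ≤ n) ∨
      (m = 2 ∧ k = 3 ∧ 3 ≤ n) ∨
      (m = 2 ∧ k = 4 ∧ 2 ≤ n) ∨
      (m = 3 ∧ k = 1 ∧ 3 ≤ n) ∨
      (m = 3 ∧ k = 2 ∧ 3 ≤ n) ∨
      (m = 4 ∧ k = 1 ∧ 3 ≤ n) ∨
      (m = 4 ∧ k = 2 ∧ 2 ≤ n) ∨
      (5 ≤ m ∧ k = 1 ∧ 2 ≤ n)) :
    TTlist [k, m, n] = ∅ := by
  rw [Set.eq_empty_iff_forall_notMem]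
  rintro ⟨x, y⟩ hmem
  obtain ⟨hx0, hx1, hy0, hy1, hxy, h1a, h1b, hz0, hz1, hyz, h2a, h2b, hw0, hw1, hzw,
    h3a, h3b⟩ := bcz_extract hmem
  rcases hc with (hb | hb) | ⟨rfl, rfl, -, hn5⟩ | ⟨rfl, rfl, hn'⟩ | ⟨rfl, rfl, hn'⟩ |
    ⟨rfl, rfl, hn'⟩ | ⟨rfl, hk6, -, hn4⟩ | ⟨rfl, hk9, hn3⟩ | ⟨rfl, rfl, hn'⟩ |
    ⟨rfl, rfl, hn4⟩ | ⟨rfl, rfl, hn3⟩ | ⟨rfl, rfl, hn2⟩ | ⟨rfl, rfl, hn3⟩ |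
    ⟨rfl, rfl, hn3⟩ | ⟨rfl, rfl, hn3⟩ | ⟨rfl, rfl, hn2⟩ | ⟨hm5, rfl, hn2⟩
  -- badPair k m
  · rcases hb with ⟨rfl, rfl⟩ | ⟨rfl, hk5⟩ | ⟨hm34, hk3⟩ | ⟨hm5, hk2⟩
    · push_cast at *; linarith
    · have h5k : (5:ℝ) ≤ (k:ℝ) := by exact_mod_cast hk5
      have hp := mul_le_mul_of_nonneg_right h5k hy0.le
      push_cast at *; linarith
    · have h3m : (3:ℝ) ≤ (m:ℝ) := by rcases hm34 with rfl | rfl <;> norm_num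
      have h3k : (3:ℝ) ≤ (k:ℝ) := by exact_mod_cast hk3
      have hp1 := mul_le_mul_of_nonneg_right h3k hy0.le
      have hp2 := mul_le_mul_of_nonneg_right h3m hz0.le
      linarith
    · have h5m : (5:ℝ) ≤ (m:ℝ) := by exact_mod_cast hm5
      have h2k : (2:ℝ) ≤ (k:ℝ) := by exact_mod_cast hk2
      have hp1 := mul_le_mul_of_nonneg_right h2k hy0.le
      have hp2 := mul_le_mul_of_nonneg_right h5m hz0.le
      linarith
  -- badPair m n
  · rcases hb with ⟨rfl, rfl⟩ | ⟨rfl, hm5'⟩ | ⟨hn34, hm3⟩ | ⟨hn5, hm2⟩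
    · push_cast at *; linarith
    · have h5m : (5:ℝ) ≤ (m:ℝ) := by exact_mod_cast hm5'
      have hp := mul_le_mul_of_nonneg_right h5m hz0.le
      push_cast at *; linarith
    · have h3n : (3:ℝ) ≤ (n:ℝ) := by rcases hn34 with rfl | rfl <;> norm_num
      have h3m : (3:ℝ) ≤ (m:ℝ) := by exact_mod_cast hm3
      have hp1 := mul_le_mul_of_nonneg_right h3m hz0.le
      have hp2 := mul_le_mul_of_nonneg_right h3n hw0.le
      linarith
    · have h5n : (5:ℝ) ≤ (n:ℝ) := by exact_mod_cast hn5
      have h2m : (2:ℝ) ≤ (m:ℝ) := by exact_mod_cast hm2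
      have hp1 := mul_le_mul_of_nonneg_right h2m hz0.le
      have hp2 := mul_le_mul_of_nonneg_right h5n hw0.le
      linarith
  -- m=1, k=2, n ≤ 5
  · have h6 : ((n:ℝ)+1) ≤ 6 := by
      have : (n:ℝ) ≤ 5 := by exact_mod_cast hn5
      linarith
    have hp := mul_le_mul_of_nonneg_right h6 hw0.le
    push_cast at *; linarith
  -- m=1, k=3
  · have h' : n ≤ 3 ∨ 9 ≤ n := by omega
    rcases h' with h' | h'
    · have h4 : ((n:ℝ)+1) ≤ 4 := by
        have : (n:ℝ) ≤ 3 := by exact_mod_cast h'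
        linarith
      have hp := mul_le_mul_of_nonneg_right h4 hw0.le
      push_cast at *; linarith
    · have h9 : (9:ℝ) ≤ (n:ℝ) := by exact_mod_cast h'
      have hp := mul_le_mul_of_nonneg_right h9 hw0.le
      push_cast at *; linarith
  -- m=1, k=4
  · have h' : n ≤ 2 ∨ 6 ≤ n := by omega
    rcases h' with h' | h'
    · have h3 : ((n:ℝ)+1) ≤ 3 := by
        have : (n:ℝ) ≤ 2 := by exact_mod_cast h'
        linarith
      have hp := mul_le_mul_of_nonneg_right h3 hw0.le
      push_cast at *; linarith
    · have h6 : (6:ℝ) ≤ (n:ℝ) := by exact_mod_cast h'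
      have hp := mul_le_mul_of_nonneg_right h6 hw0.le
      push_cast at *; linarith
  -- m=1, k=5
  · have h' : n ≤ 2 ∨ 5 ≤ n := by omega
    rcases h' with h' | h'
    · have h3 : ((n:ℝ)+1) ≤ 3 := by
        have : (n:ℝ) ≤ 2 := by exact_mod_cast h'
        linarith
      have hp := mul_le_mul_of_nonneg_right h3 hw0.le
      push_cast at *; linarith
    · have h5 : (5:ℝ) ≤ (n:ℝ) := by exact_mod_cast h'
      have hp := mul_le_mul_of_nonneg_right h5 hw0.le
      push_cast at *; linarith
  -- m=1, 6 ≤ k ≤ 8, 4 ≤ n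
  · have h6 : (6:ℝ) ≤ (k:ℝ) := by exact_mod_cast hk6
    have h4 : (4:ℝ) ≤ (n:ℝ) := by exact_mod_cast hn4
    have hp1 := mul_le_mul_of_nonneg_right h6 hy0.le
    have hp2 := mul_le_mul_of_nonneg_right h4 hw0.le
    push_cast at *; linarith
  -- m=1, 9 ≤ k, 3 ≤ n
  · have h9 : (9:ℝ) ≤ (k:ℝ) := by exact_mod_cast hk9
    have h3 : (3:ℝ) ≤ (n:ℝ) := by exact_mod_cast hn3
    have hp1 := mul_le_mul_of_nonneg_right h9 hy0.le
    have hp2 := mul_le_mul_of_nonneg_right h3 hw0.le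
    push_cast at *; linarith
  -- m=2, k=1
  · have h' : n = 1 ∨ 5 ≤ n := by omega
    rcases h' with rfl | h'
    · push_cast at *; linarith
    · have h5 : (5:ℝ) ≤ (n:ℝ) := by exact_mod_cast h'
      have hp := mul_le_mul_of_nonneg_right h5 hw0.le
      push_cast at *; linarith
  -- m=2, k=2, 4 ≤ n
  · have h4 : (4:ℝ) ≤ (n:ℝ) := by exact_mod_cast hn4
    have hp := mul_le_mul_of_nonneg_right h4 hw0.le
    push_cast at *; linarith
  -- m=2, k=3, 3 ≤ n
  · have h3 : (3:ℝ) ≤ (n:ℝ) := by exact_mod_cast hn3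
    have hp := mul_le_mul_of_nonneg_right h3 hw0.le
    push_cast at *; linarith
  -- m=2, k=4, 2 ≤ n
  · have h2 : (2:ℝ) ≤ (n:ℝ) := by exact_mod_cast hn2
    have hp := mul_le_mul_of_nonneg_right h2 hw0.le
    push_cast at *; linarith
  -- m=3, k=1, 3 ≤ n
  · have h3 : (3:ℝ) ≤ (n:ℝ) := by exact_mod_cast hn3
    have hp := mul_le_mul_of_nonneg_right h3 hw0.le
    push_cast at *; linarith
  -- m=3, k=2, 3 ≤ n
  · have h3 : (3:ℝ) ≤ (n:ℝ) := by exact_mod_cast hn3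
    have hp := mul_le_mul_of_nonneg_right h3 hw0.le
    push_cast at *; linarith
  -- m=4, k=1, 3 ≤ n
  · have h3 : (3:ℝ) ≤ (n:ℝ) := by exact_mod_cast hn3
    have hp := mul_le_mul_of_nonneg_right h3 hw0.le
    push_cast at *; linarith
  -- m=4, k=2, 2 ≤ n
  · have h2 : (2:ℝ) ≤ (n:ℝ) := by exact_mod_cast hn2
    have hp := mul_le_mul_of_nonneg_right h2 hw0.le
    push_cast at *; linarith
  -- 5 ≤ m, k=1, 2 ≤ n
  · have h5m : (5:ℝ) ≤ (m:ℝ) := by exact_mod_cast hm5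
    have h2n : (2:ℝ) ≤ (n:ℝ) := by exact_mod_cast hn2
    have hp1 := mul_le_mul_of_nonneg_right h5m hz0.le
    have hp2 := mul_le_mul_of_nonneg_right h2n hw0.le
    push_cast at *
    rcases le_or_gt (3*x) (2*y) with hcs | hcs
    · linarith
    · linarith

/-- Classification of the empty regions 𝒯(k,m,n). -/
theorem TT_triple_empty_iff (k m n : ℕ) (hk : 0 < k) (hm : 0 < m) (hn : 0 < n) :
    TTlist [k, m, n] = ∅ ↔
      (badPair k m ∨ badPair m n) ∨
      (m = 1 ∧ k = 2 ∧ 1 ≤ n ∧ n ≤ 5) ∨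
      (m = 1 ∧ k = 3 ∧ ¬ (n = 4 ∨ n = 5 ∨ n = 6 ∨ n = 7 ∨ n = 8)) ∨
      (m = 1 ∧ k = 4 ∧ ¬ (n = 3 ∨ n = 4 ∨ n = 5)) ∨
      (m = 1 ∧ k = 5 ∧ ¬ (n = 3 ∨ n = 4)) ∨
      (m = 1 ∧ 6 ≤ k ∧ k ≤ 8 ∧ 4 ≤ n) ∨
      (m = 1 ∧ 9 ≤ k ∧ 3 ≤ n) ∨
      (m = 2 ∧ k = 1 ∧ ¬ (n = 2 ∨ n = 3 ∨ n = 4)) ∨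
      (m = 2 ∧ k = 2 ∧ 4 ≤ n) ∨
      (m = 2 ∧ k = 3 ∧ 3 ≤ n) ∨
      (m = 2 ∧ k = 4 ∧ 2 ≤ n) ∨
      (m = 3 ∧ k = 1 ∧ 3 ≤ n) ∨
      (m = 3 ∧ k = 2 ∧ 3 ≤ n) ∨
      (m = 4 ∧ k = 1 ∧ 3 ≤ n) ∨
      (m = 4 ∧ k = 2 ∧ 2 ≤ n) ∨
      (5 ≤ m ∧ k = 1 ∧ 2 ≤ n) := by
  constructor
  · intro he
    by_contra hcond
    exact (good_nonempty k m n hk hm hn hcond).ne_empty he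
  · exact empty_of_cond k m n hk hm hn
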